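/- For every integer N ≥ 1 and all real numbers x1, x2, x3: Σ_{1 ≤ n1,n2,n3 ≤ N} M(n1,n2,n3,N) · x1^{n1} x2^{n2} x3^{n3} = Σ_{1 ≤ p1,p2,p3 ≤ N} |CC(p1,p2,p3,N)| · (x1)_{p1} (x2)_{p2} (x3)_{p3}, where (x)_p = x(x−1)⋯(x−p+1) is the falling factorial. -/

import Mathlib

open Finset

/-- Number of cycles of a permutation of `Fin N`, with fixed points counted as cycles. -/
def cycleCount {N : ℕ} (σ : Equiv.Perm (Fin N)) : ℕ :=
  σ.cycleType.card + (Finset.univ.filter fun x => σ x = x).card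

/-- `M n1 n2 n3 N`: the number of triples `(α1, α2, α3)` of permutations of `Fin N` having
`n1`, `n2`, `n3` cycles respectively, such that `α1 ∘ α2 ∘ α3` equals the long cycle `γ_N`. -/
noncomputable def M (n1 n2 n3 N : ℕ) : ℕ :=
  Nat.card {t : Equiv.Perm (Fin N) × Equiv.Perm (Fin N) × Equiv.Perm (Fin N) //
    t.1 * t.2.1 * t.2.2 = finRotate N ∧
    cycleCount t.1 = n1 ∧ cycleCount t.2.1 = n2 ∧ cycleCount t.2.2 = n3}

/-- A partitioned 3-cactus: partitions `π1, π2, π3` of `{1,…,N}` into `p1, p2, p3` blocks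
together with permutations `α1, α2` such that each block of `πi` is invariant under `αi`,
where `α3 = α2⁻¹ ∘ α1⁻¹ ∘ γ_N`. -/
structure CC (p1 p2 p3 N : ℕ) where
  π1 : Finpartition (Finset.univ : Finset (Fin N))
  π2 : Finpartition (Finset.univ : Finset (Fin N))
  π3 : Finpartition (Finset.univ : Finset (Fin N))
  α1 : Equiv.Perm (Fin N)
  α2 : Equiv.Perm (Fin N)
  hp1 : π1.parts.card = p1
  hp2 : π2.parts.card = p2
  hp3 : π3.parts.card = p3
  stab1 : ∀ B ∈ π1.parts, B.image (fun x => α1 x) = B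
  stab2 : ∀ B ∈ π2.parts, B.image (fun x => α2 x) = B
  stab3 : ∀ B ∈ π3.parts, B.image (fun x => (α2⁻¹ * α1⁻¹ * finRotate N) x) = B

/-- Falling factorial `(x)_p = x(x−1)⋯(x−p+1)` of a real number. -/
noncomputable def ffall (x : ℝ) (p : ℕ) : ℝ :=
  ∏ i ∈ Finset.range p, (x - i)


open Equiv Equiv.Perm

variable {N : ℕ}

lemma zpow_fix (σ : Perm (Fin N)) {x : Fin N} (h : σ x = x) (k : ℤ) : (σ ^ k) x = x :=
  zpow_apply_eq_self_of_apply_eq_self h k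

lemma card_quot (σ : Perm (Fin N)) :
    Nat.card (Quotient (SameCycle.setoid σ)) = cycleCount σ := by
  classical
  set F : Fin N → (↥σ.cycleFactorsFinset ⊕ {x : Fin N // σ x = x}) := fun x =>
    if h : σ x = x then Sum.inr ⟨x, h⟩ else
      Sum.inl ⟨σ.cycleOf x, cycleOf_mem_cycleFactorsFinset_iff.2 (mem_support.2 h)⟩ with hF
  have hwd : ∀ a b : Fin N, SameCycle σ a b → F a = F b := by
    intro a b hab
    
    by_cases ha : σ a = a
    · have hba : b = a := by
        obtain ⟨k, hk⟩ := hab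
        rw [← hk, zpow_fix σ ha]
      subst hba; rfl
    · have hb : ¬ σ b = b := by
        intro hb
        obtain ⟨k, hk⟩ := hab.symm
        have hab2 : a = b := by rw [← hk, zpow_fix σ hb]
        exact ha (hab2 ▸ hb)
      simp only [hF, dif_neg ha, dif_neg hb, Sum.inl.injEq, Subtype.mk.injEq]
      exact hab.cycleOf_eq
  have hbij : Function.Bijective (Quotient.lift (s := SameCycle.setoid σ) F hwd) := by
    constructor
    · rintro ⟨a⟩ ⟨b⟩ hab
      change F a = F b at hab
      apply Quotient.sound
      show SameCycle σ a b
      by_cases ha : σ a = a <;> by_cases hb : σ b = b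
      · simp only [hF, dif_pos ha, dif_pos hb, Sum.inr.injEq, Subtype.mk.injEq] at hab
        exact hab ▸ SameCycle.refl σ a
      · simp only [hF, dif_pos ha, dif_neg hb, reduceCtorEq] at hab
      · simp only [hF, dif_neg ha, dif_pos hb, reduceCtorEq] at hab
      · simp only [hF, dif_neg ha, dif_neg hb, Sum.inl.injEq, Subtype.mk.injEq] at hab
        have : b ∈ (σ.cycleOf a).support := by
          rw [hab, mem_support_cycleOf_iff]
          exact ⟨SameCycle.refl σ _, mem_support.2 hb⟩
        exact (mem_support_cycleOf_iff.1 this).1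
    · rintro (⟨c, hc⟩ | ⟨x, hx⟩)
      · have hcyc := (mem_cycleFactorsFinset_iff.1 hc).1
        obtain ⟨a, ha⟩ := hcyc.nonempty_support
        have haσ : a ∈ σ.support := mem_cycleFactorsFinset_support_le hc ha
        refine ⟨⟦a⟧, ?_⟩
        have hna : ¬ σ a = a := mem_support.1 haσ
        simp only [Quotient.lift_mk, hF, dif_neg hna]
        congr 1
        exact Subtype.ext (cycle_is_cycleOf ha hc).symm
      · exact ⟨⟦x⟧, by simp [hF, hx]⟩
  rw [Nat.card_congr (Equiv.ofBijective _ hbij), Nat.card_sum, cycleCount]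
  congr 1
  · rw [Nat.card_eq_fintype_card, Fintype.card_coe, cycleType_def, Multiset.card_map]; rfl
  · rw [Nat.card_eq_fintype_card, Fintype.card_subtype]

lemma fix_zpow {m : ℕ} (σ : Perm (Fin N)) (f : Fin N → Fin m) (hf : ∀ i, f (σ i) = f i)
    (k : ℤ) (x : Fin N) : f ((σ ^ k) x) = f x := by
  have hn : ∀ (n : ℕ) (x : Fin N), f ((σ ^ n) x) = f x := by
    intro n
    induction n with
    | zero => simp
    | succ n ih =>
        intro x
        rw [pow_succ, Perm.mul_apply]
        exact (ih (σ x)).trans (hf x)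
  obtain (n | n) := k
  · simpa using hn n x
  · rw [Int.negSucc_eq, zpow_neg]
    have hc : ((n : ℤ) + 1) = ((n + 1 : ℕ) : ℤ) := by push_cast; ring
    rw [hc, zpow_natCast, ← hn (n + 1) ((σ ^ (n + 1))⁻¹ x), ← Perm.mul_apply, mul_inv_cancel, Perm.one_apply]

lemma card_fix (σ : Perm (Fin N)) (m : ℕ) :
    Nat.card {f : Fin N → Fin m // ∀ i, f (σ i) = f i} = m ^ cycleCount σ := by
  classical
  have key : {f : Fin N → Fin m // ∀ i, f (σ i) = f i} ≃
      (Quotient (SameCycle.setoid σ) → Fin m) := by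
    refine ⟨fun f => Quotient.lift (s := SameCycle.setoid σ) f.1
        (fun a b hab => ?_),
      fun g => ⟨fun i => g ⟦i⟧, fun i => congrArg g (Quotient.sound ?_)⟩, fun f => ?_, fun g => ?_⟩
    · obtain ⟨k, hk⟩ := (hab : SameCycle σ a b)
      rw [← hk, fix_zpow σ f.1 f.2]
    · exact sameCycle_apply_left.2 (SameCycle.refl σ i)
    · ext i; rfl
    · funext q; induction q using Quotient.ind; rfl
  rw [Nat.card_congr key, Nat.card_fun, card_quot, Nat.card_eq_fintype_card, Fintype.card_fin]


instance {m : ℕ} (f : Fin N → Fin m) : DecidableRel (Setoid.ker f).r :=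
  fun a b => inferInstanceAs (Decidable (f a = f b))

/-- partition of `univ` into fibers of `f`. -/
def fiberPartition {m : ℕ} (f : Fin N → Fin m) : Finpartition (univ : Finset (Fin N)) :=
  Finpartition.ofSetoid (Setoid.ker f)

lemma mem_fiberPart {m : ℕ} (f : Fin N → Fin m) (a b : Fin N) :
    b ∈ (fiberPartition f).part a ↔ f a = f b :=
  Finpartition.mem_part_ofSetoid_iff_rel

lemma parts_eq_image_part (π : Finpartition (univ : Finset (Fin N))) :
    π.parts = univ.image π.part := by
  ext B
  simp only [mem_image, mem_univ, true_and]
  constructor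
  · intro hB
    obtain ⟨a, ha⟩ := π.nonempty_of_mem_parts hB
    exact ⟨a, π.part_eq_of_mem hB ha⟩
  · rintro ⟨a, rfl⟩
    exact π.part_mem.2 (mem_univ a)

lemma finpartition_ext_part {π ρ : Finpartition (univ : Finset (Fin N))}
    (h : ∀ i, π.part i = ρ.part i) : π = ρ := by
  apply Finpartition.ext
  rw [parts_eq_image_part π, parts_eq_image_part ρ]
  exact Finset.image_congr fun i _ => h i

lemma part_eq_part_iff_eq {m : ℕ} (π : Finpartition (univ : Finset (Fin N)))
    (f : Fin N → Fin m) (hf : fiberPartition f = π) (a b : Fin N) :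
    f a = f b ↔ π.part a = π.part b := by
  have h1 : b ∈ π.part a ↔ f a = f b := by rw [← hf]; exact mem_fiberPart f a b
  constructor
  · intro h
    exact ((π.mem_part_iff_part_eq_part (mem_univ b) (mem_univ a)).1 (h1.2 h)).symm
  · intro h
    exact h1.1 ((π.mem_part_iff_part_eq_part (mem_univ b) (mem_univ a)).2 h.symm)

noncomputable def fiberEquiv {m : ℕ} (π : Finpartition (univ : Finset (Fin N))) :
    {f : Fin N → Fin m // fiberPartition f = π} ≃ (↥π.parts ↪ Fin m) where
  toFun f := ⟨fun B => f.1 (π.nonempty_of_mem_parts B.2).choose, by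
    rintro ⟨B, hB⟩ ⟨C, hC⟩ hfc
    have h1 := (π.nonempty_of_mem_parts hB).choose_spec
    have h2 := (π.nonempty_of_mem_parts hC).choose_spec
    rw [part_eq_part_iff_eq π f.1 f.2] at hfc
    rw [π.part_eq_of_mem hB h1, π.part_eq_of_mem hC h2] at hfc
    exact Subtype.ext hfc⟩
  invFun g := ⟨fun i => g ⟨π.part i, π.part_mem.2 (mem_univ i)⟩, by
    apply finpartition_ext_part
    intro a
    ext b
    rw [mem_fiberPart]
    rw [π.mem_part_iff_part_eq_part (mem_univ b) (mem_univ a)]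
    constructor
    · intro hab
      exact (Subtype.ext_iff.1 (g.injective hab)).symm
    · intro h
      exact congrArg g (Subtype.ext h.symm)⟩
  left_inv f := by
    apply Subtype.ext
    funext i
    dsimp only
    have hBp : π.part i ∈ π.parts := π.part_mem.2 (mem_univ i)
    have hc : (π.nonempty_of_mem_parts hBp).choose ∈ π.part i :=
      (π.nonempty_of_mem_parts hBp).choose_spec
    exact (part_eq_part_iff_eq π f.1 f.2 _ _).2 (π.part_eq_of_mem hBp hc)
  right_inv g := by
    apply DFunLike.ext
    rintro ⟨B, hB⟩
    have hc : (π.nonempty_of_mem_parts hB).choose ∈ B := (π.nonempty_of_mem_parts hB).choose_spec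
    exact congrArg g (Subtype.ext (π.part_eq_of_mem hB hc))

lemma card_fiber_eq {m : ℕ} (π : Finpartition (univ : Finset (Fin N))) :
    Nat.card {f : Fin N → Fin m // fiberPartition f = π} = m.descFactorial π.parts.card := by
  rw [Nat.card_congr (fiberEquiv π), Nat.card_eq_fintype_card, Fintype.card_embedding_eq,
    Fintype.card_coe, Fintype.card_fin]

lemma fiber_invariant {m : ℕ} (f : Fin N → Fin m) (σ : Perm (Fin N)) :
    (∀ i, f (σ i) = f i) ↔
      ∀ B ∈ (fiberPartition f).parts, B.image (fun x => σ x) = B := by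
  constructor
  · intro hf B hB
    obtain ⟨a, ha⟩ := (fiberPartition f).nonempty_of_mem_parts hB
    have hBa : (fiberPartition f).part a = B := (fiberPartition f).part_eq_of_mem hB ha
    have hsub : B.image (fun x => σ x) ⊆ B := by
      intro y hy
      obtain ⟨x, hx, rfl⟩ := mem_image.1 hy
      rw [← hBa] at hx ⊢
      rw [mem_fiberPart] at hx ⊢
      rw [hf x]; exact hx
    exact eq_of_subset_of_card_le hsub (le_of_eq (card_image_of_injective B σ.injective).symm)
  · intro h i
    have hp := (fiberPartition f).part_mem.2 (mem_univ i)
    have hmem : σ i ∈ (fiberPartition f).part i := by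
      rw [← h _ hp]
      exact mem_image_of_mem _ ((fiberPartition f).mem_part (mem_univ i))
    exact ((mem_fiberPart f i (σ i)).1 hmem).symm

lemma key_nat (σ : Perm (Fin N)) (m : ℕ) :
    ∑ π ∈ univ.filter (fun π : Finpartition (univ : Finset (Fin N)) =>
        ∀ B ∈ π.parts, B.image (fun x => σ x) = B), m.descFactorial π.parts.card
      = m ^ cycleCount σ := by
  classical
  have h0 : m ^ cycleCount σ =
      (univ.filter fun f : Fin N → Fin m => ∀ i, f (σ i) = f i).card := by
    rw [← card_fix σ m, Nat.card_eq_fintype_card, Fintype.card_subtype]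
  rw [h0, Finset.card_eq_sum_card_fiberwise (f := fun f => fiberPartition f)
    (t := univ.filter (fun π : Finpartition (univ : Finset (Fin N)) =>
        ∀ B ∈ π.parts, B.image (fun x => σ x) = B))]
  · apply sum_congr rfl
    intro π hπ
    rw [mem_filter] at hπ
    rw [filter_filter]
    have he : (univ.filter fun f : Fin N → Fin m =>
        (∀ i, f (σ i) = f i) ∧ fiberPartition f = π) =
        univ.filter (fun f => fiberPartition f = π) := by
      apply filter_congr
      intro f _
      simp only [and_iff_right_iff_imp]
      intro hfp
      rw [fiber_invariant f σ, hfp]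
      exact hπ.2
    rw [he, ← Fintype.card_subtype, ← Nat.card_eq_fintype_card, card_fiber_eq]
  · intro f hf
    rw [mem_coe, mem_filter] at hf ⊢
    exact ⟨mem_univ _, (fiber_invariant f σ).1 hf.2⟩

open Polynomial

lemma ffall_natCast (m p : ℕ) : ((m.descFactorial p : ℕ) : ℝ) = ffall (m : ℝ) p := by
  induction p with
  | zero => simp [ffall]
  | succ p ih =>
    rw [Nat.descFactorial_succ, ffall, Finset.prod_range_succ, ← ffall, ← ih]
    by_cases h : p ≤ m
    · push_cast [Nat.cast_sub h]
      ring
    · push_neg at h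
      have h1 : m - p = 0 := Nat.sub_eq_zero_of_le h.le
      have h2 : ffall (m : ℝ) p = 0 := by
        apply Finset.prod_eq_zero (Finset.mem_range.2 h)
        simp
      rw [h1, ih, h2]
      push_cast
      ring

lemma ffall_eval (x : ℝ) (p : ℕ) :
    ffall x p = Polynomial.eval x (∏ i ∈ Finset.range p, (X - C (i : ℝ))) := by
  rw [Polynomial.eval_prod]
  exact Finset.prod_congr rfl fun i _ => by simp

/-- real version of key identity from the nat version. -/
lemma key_real {ι : Type*} (s : Finset ι) (c : ι → ℕ) (d : ℕ)
    (h : ∀ m : ℕ, ∑ π ∈ s, m.descFactorial (c π) = m ^ d) (x : ℝ) :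
    ∑ π ∈ s, ffall x (c π) = x ^ d := by
  have hpq : (∑ π ∈ s, ∏ i ∈ Finset.range (c π), (X - C (i : ℝ))) = X ^ d := by
    apply Polynomial.eq_of_infinite_eval_eq
    apply Set.Infinite.mono (s := Set.range (fun m : ℕ => (m : ℝ)))
    · rintro _ ⟨m, rfl⟩
      simp only [Set.mem_setOf_eq, Polynomial.eval_finset_sum, Polynomial.eval_pow,
        Polynomial.eval_X]
      have hm := h m
      have : ((∑ π ∈ s, m.descFactorial (c π) : ℕ) : ℝ) = ((m ^ d : ℕ) : ℝ) := by rw [hm]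
      push_cast at this
      rw [← this]
      exact Finset.sum_congr rfl fun π _ => by rw [← ffall_eval, ← ffall_natCast]
    · exact Set.infinite_range_of_injective Nat.cast_injective
  have := congrArg (Polynomial.eval x) hpq
  rw [Polynomial.eval_finset_sum, Polynomial.eval_pow, Polynomial.eval_X] at this
  rw [← this]
  exact Finset.sum_congr rfl fun π _ => ffall_eval x (c π)

def fcnt (σ : Perm (Fin N)) (p : ℕ) : ℕ :=
  (univ.filter (fun π : Finpartition (univ : Finset (Fin N)) =>
    (∀ B ∈ π.parts, B.image (fun x => σ x) = B) ∧ π.parts.card = p)).card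

lemma parts_card_mem (hN : 1 ≤ N) (π : Finpartition (univ : Finset (Fin N))) :
    π.parts.card ∈ Icc 1 N := by
  rw [mem_Icc]
  constructor
  · have hne : (univ : Finset (Fin N)).Nonempty := ⟨⟨0, hN⟩, mem_univ _⟩
    exact card_pos.2 (π.parts_nonempty hne.ne_empty)
  · simpa using π.card_parts_le_card

lemma cycleCount_mem (hN : 1 ≤ N) (σ : Perm (Fin N)) : cycleCount σ ∈ Icc 1 N := by
  rw [mem_Icc, ← card_quot σ]
  constructor
  · have hne : Nonempty (Quotient (SameCycle.setoid σ)) := ⟨⟦⟨0, hN⟩⟧⟩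
    exact Nat.one_le_iff_ne_zero.2 (Nat.card_ne_zero.2 ⟨hne, Quotient.finite _⟩)
  · have hs : Function.Surjective (Quotient.mk (SameCycle.setoid σ)) :=
      Quotient.mk_surjective
    have h := Nat.card_le_card_of_surjective _ hs
    simpa [Nat.card_eq_fintype_card] using h

lemma keyL (hN : 1 ≤ N) (σ : Perm (Fin N)) (x : ℝ) :
    ∑ p ∈ Icc 1 N, (fcnt σ p : ℝ) * ffall x p = x ^ cycleCount σ := by
  classical
  have base : ∑ π ∈ univ.filter (fun π : Finpartition (univ : Finset (Fin N)) =>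
      ∀ B ∈ π.parts, B.image (fun x => σ x) = B), ffall x π.parts.card = x ^ cycleCount σ :=
    key_real _ _ _ (fun m => key_nat σ m) x
  rw [← base, ← Finset.sum_fiberwise_of_maps_to (g := fun π => π.parts.card)
    (t := Icc 1 N) (fun π _ => parts_card_mem hN π) (fun π => ffall x π.parts.card)]
  apply sum_congr rfl
  intro p hp
  have h1 : ∀ π ∈ (univ.filter (fun π : Finpartition (univ : Finset (Fin N)) =>
      ∀ B ∈ π.parts, B.image (fun x => σ x) = B)).filter (fun π => π.parts.card = p),
      ffall x π.parts.card = ffall x p := fun π hπ => by rw [(mem_filter.1 hπ).2]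
  rw [sum_congr rfl h1, sum_const, nsmul_eq_mul]
  congr 2
  rw [filter_filter]
  rfl

def ccEquiv (p1 p2 p3 N : ℕ) : CC p1 p2 p3 N ≃
    (a : Equiv.Perm (Fin N) × Equiv.Perm (Fin N)) ×
      ({π : Finpartition (Finset.univ : Finset (Fin N)) //
          (∀ B ∈ π.parts, B.image (fun x => a.1 x) = B) ∧ π.parts.card = p1} ×
       {π : Finpartition (Finset.univ : Finset (Fin N)) //
          (∀ B ∈ π.parts, B.image (fun x => a.2 x) = B) ∧ π.parts.card = p2} ×
       {π : Finpartition (Finset.univ : Finset (Fin N)) //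
          (∀ B ∈ π.parts, B.image (fun x => (a.2⁻¹ * a.1⁻¹ * finRotate N) x) = B) ∧
            π.parts.card = p3}) where
  toFun c := ⟨(c.α1, c.α2), ⟨c.π1, c.stab1, c.hp1⟩, ⟨c.π2, c.stab2, c.hp2⟩,
    ⟨c.π3, c.stab3, c.hp3⟩⟩
  invFun s := ⟨s.2.1.1, s.2.2.1.1, s.2.2.2.1, s.1.1, s.1.2, s.2.1.2.2, s.2.2.1.2.2,
    s.2.2.2.2.2, s.2.1.2.1, s.2.2.1.2.1, s.2.2.2.2.1⟩
  left_inv _ := rfl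
  right_inv _ := rfl

lemma hCC (p1 p2 p3 : ℕ) : Nat.card (CC p1 p2 p3 N) =
    ∑ a : Equiv.Perm (Fin N) × Equiv.Perm (Fin N),
      fcnt a.1 p1 * fcnt a.2 p2 * fcnt (a.2⁻¹ * a.1⁻¹ * finRotate N) p3 := by
  classical
  rw [Nat.card_congr (ccEquiv p1 p2 p3 N), Nat.card_eq_fintype_card, Fintype.card_sigma]
  apply Finset.sum_congr rfl
  intro a _
  rw [Fintype.card_prod, Fintype.card_prod, Fintype.card_subtype, Fintype.card_subtype,
    Fintype.card_subtype, ← mul_assoc]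
  rfl

theorem stmt2 (N : ℕ) (hN : 1 ≤ N) (x1 x2 x3 : ℝ) :
    ∑ n1 ∈ Icc 1 N, ∑ n2 ∈ Icc 1 N, ∑ n3 ∈ Icc 1 N,
      (M n1 n2 n3 N : ℝ) * x1 ^ n1 * x2 ^ n2 * x3 ^ n3 =
    ∑ p1 ∈ Icc 1 N, ∑ p2 ∈ Icc 1 N, ∑ p3 ∈ Icc 1 N,
      (Nat.card (CC p1 p2 p3 N) : ℝ) * ffall x1 p1 * ffall x2 p2 * ffall x3 p3 := by
  classical
  set D := (univ : Finset (Equiv.Perm (Fin N) × Equiv.Perm (Fin N) × Equiv.Perm (Fin N))).filter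
    (fun t => t.1 * t.2.1 * t.2.2 = finRotate N) with hD
  have hM : ∀ n1 n2 n3 : ℕ, M n1 n2 n3 N =
      (D.filter (fun t => (cycleCount t.1, cycleCount t.2.1, cycleCount t.2.2)
        = (n1, n2, n3))).card := by
    intro n1 n2 n3
    rw [M, Nat.card_eq_fintype_card, Fintype.card_subtype, hD, filter_filter]
    congr 1
    apply Finset.filter_congr
    intro t _
    simp [Prod.ext_iff, and_assoc]
  have hmaps : ∀ t ∈ D, (cycleCount t.1, cycleCount t.2.1, cycleCount t.2.2)
      ∈ Icc 1 N ×ˢ Icc 1 N ×ˢ Icc 1 N := by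
    intro t _
    simp only [mem_product]
    exact ⟨cycleCount_mem hN _, cycleCount_mem hN _, cycleCount_mem hN _⟩
  have hLHS : ∑ n1 ∈ Icc 1 N, ∑ n2 ∈ Icc 1 N, ∑ n3 ∈ Icc 1 N,
      (M n1 n2 n3 N : ℝ) * x1 ^ n1 * x2 ^ n2 * x3 ^ n3 =
      ∑ t ∈ D, x1 ^ cycleCount t.1 * x2 ^ cycleCount t.2.1 * x3 ^ cycleCount t.2.2 := by
    rw [← Finset.sum_fiberwise_of_maps_to hmaps
      (fun t => x1 ^ cycleCount t.1 * x2 ^ cycleCount t.2.1 * x3 ^ cycleCount t.2.2),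
      Finset.sum_product]
    apply sum_congr rfl; intro n1 _
    rw [Finset.sum_product]
    apply sum_congr rfl; intro n2 _
    apply sum_congr rfl; intro n3 _
    have hc : ∀ t ∈ D.filter (fun t => (cycleCount t.1, cycleCount t.2.1, cycleCount t.2.2)
        = (n1, n2, n3)), x1 ^ cycleCount t.1 * x2 ^ cycleCount t.2.1 * x3 ^ cycleCount t.2.2
        = x1 ^ n1 * x2 ^ n2 * x3 ^ n3 := by
      intro t ht
      have h := (mem_filter.1 ht).2
      simp only [Prod.ext_iff] at h
      rw [h.1, h.2.1, h.2.2]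
    rw [sum_congr rfl hc, sum_const, nsmul_eq_mul, hM n1 n2 n3]
    push_cast
    ring
  have swap : ∀ (F : ℕ → ℕ → ℕ → (Equiv.Perm (Fin N) × Equiv.Perm (Fin N)) → ℝ),
      (∑ p1 ∈ Icc 1 N, ∑ p2 ∈ Icc 1 N, ∑ p3 ∈ Icc 1 N,
        ∑ a : Equiv.Perm (Fin N) × Equiv.Perm (Fin N), F p1 p2 p3 a)
      = ∑ a : Equiv.Perm (Fin N) × Equiv.Perm (Fin N),
          ∑ p1 ∈ Icc 1 N, ∑ p2 ∈ Icc 1 N, ∑ p3 ∈ Icc 1 N, F p1 p2 p3 a := by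
    intro F
    calc (∑ p1 ∈ Icc 1 N, ∑ p2 ∈ Icc 1 N, ∑ p3 ∈ Icc 1 N, ∑ a, F p1 p2 p3 a)
        = ∑ p1 ∈ Icc 1 N, ∑ p2 ∈ Icc 1 N, ∑ a, ∑ p3 ∈ Icc 1 N, F p1 p2 p3 a :=
          sum_congr rfl fun p1 _ => sum_congr rfl fun p2 _ => Finset.sum_comm
      _ = ∑ p1 ∈ Icc 1 N, ∑ a, ∑ p2 ∈ Icc 1 N, ∑ p3 ∈ Icc 1 N, F p1 p2 p3 a :=
          sum_congr rfl fun p1 _ => Finset.sum_comm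
      _ = ∑ a, ∑ p1 ∈ Icc 1 N, ∑ p2 ∈ Icc 1 N, ∑ p3 ∈ Icc 1 N, F p1 p2 p3 a :=
          Finset.sum_comm
  have factor : ∀ (g1 g2 g3 : ℕ → ℝ),
      (∑ p1 ∈ Icc 1 N, ∑ p2 ∈ Icc 1 N, ∑ p3 ∈ Icc 1 N, g1 p1 * g2 p2 * g3 p3)
      = (∑ p ∈ Icc 1 N, g1 p) * (∑ p ∈ Icc 1 N, g2 p) * (∑ p ∈ Icc 1 N, g3 p) := by
    intro g1 g2 g3
    rw [Finset.sum_mul_sum, Finset.sum_mul]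
    apply sum_congr rfl
    intro p1 _
    rw [Finset.sum_mul_sum]
  have step1 : ∀ p1 p2 p3 : ℕ,
      (Nat.card (CC p1 p2 p3 N) : ℝ) * ffall x1 p1 * ffall x2 p2 * ffall x3 p3
      = ∑ a : Equiv.Perm (Fin N) × Equiv.Perm (Fin N),
          ((fcnt a.1 p1 : ℝ) * ffall x1 p1) * ((fcnt a.2 p2 : ℝ) * ffall x2 p2) *
            ((fcnt (a.2⁻¹ * a.1⁻¹ * finRotate N) p3 : ℝ) * ffall x3 p3) := by
    intro p1 p2 p3
    rw [hCC]
    push_cast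
    rw [Finset.sum_mul, Finset.sum_mul, Finset.sum_mul]
    apply sum_congr rfl
    intro a _
    ring
  have hRHS : ∑ p1 ∈ Icc 1 N, ∑ p2 ∈ Icc 1 N, ∑ p3 ∈ Icc 1 N,
      (Nat.card (CC p1 p2 p3 N) : ℝ) * ffall x1 p1 * ffall x2 p2 * ffall x3 p3
      = ∑ a : Equiv.Perm (Fin N) × Equiv.Perm (Fin N),
          x1 ^ cycleCount a.1 * x2 ^ cycleCount a.2 *
            x3 ^ cycleCount (a.2⁻¹ * a.1⁻¹ * finRotate N) := by
    rw [sum_congr rfl fun p1 _ => sum_congr rfl fun p2 _ => sum_congr rfl fun p3 _ =>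
      step1 p1 p2 p3, swap]
    apply sum_congr rfl
    intro a _
    rw [factor, keyL hN a.1 x1, keyL hN a.2 x2, keyL hN _ x3]
  have bridge : ∑ t ∈ D, x1 ^ cycleCount t.1 * x2 ^ cycleCount t.2.1 * x3 ^ cycleCount t.2.2
      = ∑ a : Equiv.Perm (Fin N) × Equiv.Perm (Fin N),
          x1 ^ cycleCount a.1 * x2 ^ cycleCount a.2 *
            x3 ^ cycleCount (a.2⁻¹ * a.1⁻¹ * finRotate N) := by
    apply Finset.sum_nbij' (i := fun t => (t.1, t.2.1))
      (j := fun a => (a.1, a.2, a.2⁻¹ * a.1⁻¹ * finRotate N))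
    · intro t _
      exact mem_univ _
    · intro a _
      rw [hD, mem_filter]
      refine ⟨mem_univ _, ?_⟩
      group
    · intro t ht
      have h := (mem_filter.1 (hD ▸ ht)).2
      have h3 : t.2.1⁻¹ * t.1⁻¹ * finRotate N = t.2.2 := by rw [← h]; group
      exact Prod.ext rfl (Prod.ext rfl h3)
    · intro a _
      rfl
    · intro t ht
      have h := (mem_filter.1 (hD ▸ ht)).2
      have h3 : t.2.1⁻¹ * t.1⁻¹ * finRotate N = t.2.2 := by rw [← h]; group
      rw [h3]
  rw [hLHS, hRHS, bridge]
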